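/- Let W ∈ ℝ^{n×n} be a block matrix and suppose that for players i ≠ j the blockwise path-weight condition holds: ∑_{p ∈ P^k_{ij}} ∏ W_{v_{l+1},v_l} = 0 for all 0 < k < n. Then for the disturbed dynamics y^{k+1} = W y^k − c − d^k with d^k supported on block i, and undisturbed dynamics x^{k+1} = W x^k − c with x^0 = y^0, the block-j components satisfy y^k_j = x^k_j for all k ≥ 0, for every choice of disturbance sequence d^k and every initial condition. -/

import Mathlib

open Matrix Finset

/-- The block index type for a partition `n = n 0 + ⋯ + n (N-1)`. -/
abbrev BlkIdx {N : ℕ} (n : Fin N → ℕ) := (p : Fin N) × Fin (n p)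

/-- The `(p,q)` block of `W`, embedded back into the big matrix padded with zeros. -/
def blkPad {N : ℕ} {n : Fin N → ℕ} (W : Matrix (BlkIdx n) (BlkIdx n) ℝ)
    (p q : Fin N) : Matrix (BlkIdx n) (BlkIdx n) ℝ :=
  Matrix.of fun a b => if a.1 = p ∧ b.1 = q then W a b else 0

/-- The weight of the path visiting blocks `v 0, v 1, …, v k`:
`W_{v k, v (k-1)} ⋯ W_{v 1, v 0}` (blocks embedded as zero-padded matrices). -/
def pathWeight {N : ℕ} {n : Fin N → ℕ} (W : Matrix (BlkIdx n) (BlkIdx n) ℝ)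
    (v : ℕ → Fin N) : ℕ → Matrix (BlkIdx n) (BlkIdx n) ℝ
  | 0 => 1
  | k + 1 => blkPad W (v (k + 1)) (v k) * pathWeight W v k

/-- The sum of path weights over all paths of length `k` from block `i` to block `j`. -/
def pathSum {N : ℕ} {n : Fin N → ℕ} (W : Matrix (BlkIdx n) (BlkIdx n) ℝ)
    (i j : Fin N) (k : ℕ) : Matrix (BlkIdx n) (BlkIdx n) ℝ :=
  ∑ v ∈ Finset.univ.filter
      (fun v : Fin (k + 1) → Fin N => v 0 = i ∧ v (Fin.last k) = j),
    pathWeight W (fun l => v ⟨min l k, by omega⟩) k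

section Aux

lemma snocEquiv_apply {N m : ℕ} (u : Fin (m + 1) → Fin N) (q : Fin N) (idx : Fin (m + 2)) :
    Fin.snocEquiv (fun _ : Fin (m + 2) => Fin N) (q, u) idx
      = if h : idx.val < m + 1 then u ⟨idx.val, h⟩ else q := by
  by_cases h : idx.val < m + 1
  · simp [Fin.snocEquiv, Fin.snoc, h, Fin.castLT, Nat.le_of_lt_succ h]
  · simp [Fin.snocEquiv, Fin.snoc, h, show ¬ (idx.val ≤ m) by omega]

variable {N : ℕ} {n : Fin N → ℕ} (W : Matrix (BlkIdx n) (BlkIdx n) ℝ)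

lemma pathWeight_congr (v v' : ℕ → Fin N) : ∀ k, (∀ l ≤ k, v l = v' l) →
    pathWeight W v k = pathWeight W v' k
  | 0, _ => rfl
  | k + 1, h => by
      rw [pathWeight, pathWeight, h (k+1) le_rfl, h k (by omega),
        pathWeight_congr v v' k (fun l hl => h l (by omega))]

lemma pathWeight_row (v : ℕ → Fin N) (k : ℕ) (a b : BlkIdx n)
    (ha : a.1 ≠ v (k + 1)) : pathWeight W v (k + 1) a b = 0 := by
  rw [pathWeight, Matrix.mul_apply]
  refine Finset.sum_eq_zero fun c _ => ?_
  rw [blkPad, Matrix.of_apply, if_neg (fun h => ha h.1), zero_mul]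

lemma pathWeight_col (v : ℕ → Fin N) : ∀ k, ∀ a b : BlkIdx n,
    b.1 ≠ v 0 → pathWeight W v (k + 1) a b = 0
  | 0, a, b, hb => by
      rw [pathWeight, pathWeight, mul_one, blkPad, Matrix.of_apply,
        if_neg (fun h => hb h.2)]
  | k + 1, a, b, hb => by
      rw [pathWeight, Matrix.mul_apply]
      refine Finset.sum_eq_zero fun c _ => ?_
      rw [pathWeight_col v k c b hb, mul_zero]

lemma sum_blkPad_mul (p : Fin N) (M : Matrix (BlkIdx n) (BlkIdx n) ℝ)
    (hM : ∀ a b : BlkIdx n, a.1 ≠ p → M a b = 0) :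
    (∑ q : Fin N, blkPad W q p) * M = W * M := by
  ext a b
  rw [Matrix.mul_apply, Matrix.mul_apply]
  refine Finset.sum_congr rfl fun c _ => ?_
  by_cases hc : c.1 = p
  · congr 1
    rw [Matrix.sum_apply]
    rw [Finset.sum_eq_single a.1]
    · simp [blkPad, hc]
    · intro q _ hq
      simp [blkPad, Ne.symm hq]
    · simp
  · rw [hM c b hc, mul_zero, mul_zero]

lemma sum_blkPad : ∑ p : Fin N, ∑ q : Fin N, blkPad W q p = W := by
  ext a b
  simp only [Matrix.sum_apply, blkPad, Matrix.of_apply]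
  have h1 : ∀ p : Fin N, (∑ q : Fin N, if a.1 = q ∧ b.1 = p then W a b else 0)
      = if b.1 = p then W a b else 0 := by
    intro p
    simp [ite_and, Finset.sum_ite_eq]
  simp [h1, Finset.sum_ite_eq]

lemma sum_pathWeight : ∀ m : ℕ,
    ∑ v : Fin (m + 1 + 1) → Fin N,
      pathWeight W (fun l => v ⟨min l (m + 1), by omega⟩) (m + 1) = W ^ (m + 1)
  | 0 => by
      have h1 : ∀ v : Fin 2 → Fin N,
          pathWeight W (fun l => v ⟨min l 1, by omega⟩) 1 = blkPad W (v 1) (v 0) := by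
        intro v
        rw [pathWeight, pathWeight, mul_one]
        congr 1 <;> congr 1 <;> exact Fin.ext (by simp)
      simp only [h1]
      rw [pow_one]
      calc ∑ v : Fin 2 → Fin N, blkPad W (v 1) (v 0)
          = ∑ pq : Fin N × Fin N, blkPad W pq.2 pq.1 :=
            Fintype.sum_equiv (finTwoArrowEquiv (Fin N))
              (fun v => blkPad W (v 1) (v 0)) (fun pq => blkPad W pq.2 pq.1) (fun v => rfl)
        _ = W := by rw [Fintype.sum_prod_type]; exact sum_blkPad W
  | m + 1 => by
      rw [← Equiv.sum_comp (Fin.snocEquiv (fun _ : Fin (m + 3) => Fin N))]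
      rw [Fintype.sum_prod_type]
      have hterm : ∀ q : Fin N, ∀ u : Fin (m + 2) → Fin N,
          pathWeight W (fun l => Fin.snocEquiv (fun _ : Fin (m + 3) => Fin N) (q, u)
            ⟨min l (m + 2), by omega⟩) (m + 2)
          = blkPad W q (u ⟨m + 1, by omega⟩) *
              pathWeight W (fun l => u ⟨min l (m + 1), by omega⟩) (m + 1) := by
        intro q u
        rw [pathWeight]
        congr 1
        · have e1 : Fin.snocEquiv (fun _ : Fin (m + 3) => Fin N) (q, u)
              ⟨min (m + 1 + 1) (m + 2), by omega⟩ = q := by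
            rw [snocEquiv_apply, dif_neg (show ¬ (min (m + 1 + 1) (m + 2) < m + 2) by omega)]
          have e2 : Fin.snocEquiv (fun _ : Fin (m + 3) => Fin N) (q, u)
              ⟨min (m + 1) (m + 2), by omega⟩ = u ⟨m + 1, by omega⟩ := by
            rw [snocEquiv_apply, dif_pos (show min (m + 1) (m + 2) < m + 2 by omega)]
            congr 1
            exact Fin.ext (show min (m + 1) (m + 2) = m + 1 by omega)
          rw [e1, e2]
        · refine pathWeight_congr W _ _ (m + 1) fun l hl => ?_
          rw [snocEquiv_apply, dif_pos (show min l (m + 2) < m + 2 by omega)]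
          congr 1
          exact Fin.ext (show min l (m + 2) = min l (m + 1) by omega)
      calc ∑ q : Fin N, ∑ u : Fin (m + 2) → Fin N,
            pathWeight W (fun l => Fin.snocEquiv (fun _ : Fin (m + 3) => Fin N) (q, u)
              ⟨min l (m + 2), by omega⟩) (m + 2)
          = ∑ u : Fin (m + 2) → Fin N,
              W * pathWeight W (fun l => u ⟨min l (m + 1), by omega⟩) (m + 1) := by
            rw [Finset.sum_comm]
            refine Finset.sum_congr rfl fun u _ => ?_
            simp only [hterm]
            rw [← Finset.sum_mul, sum_blkPad_mul]
            intro a b ha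
            refine pathWeight_row W _ m a b ?_
            intro h
            refine ha ?_
            rw [h]
            congr 1
            exact Fin.ext (show min (m + 1) (m + 1) = m + 1 by omega)
        _ = W * ∑ u : Fin (m + 2) → Fin N,
              pathWeight W (fun l => u ⟨min l (m + 1), by omega⟩) (m + 1) := by
            rw [Finset.mul_sum]
        _ = W ^ (m + 2) := by
            rw [sum_pathWeight m]
            exact (pow_succ' W (m + 1)).symm

lemma pow_apply_small (i j : Fin N) (hij : i ≠ j)
    (hpath : ∀ k, 0 < k → k < ∑ p, n p → pathSum W i j k = 0) :
    ∀ m, m < ∑ p, n p → ∀ a b : BlkIdx n, a.1 = j → b.1 = i → (W ^ m) a b = 0 := by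
  intro m hm a b ha hb
  match m, hm with
  | 0, hm =>
    rw [pow_zero, Matrix.one_apply_ne]
    intro h
    exact hij (hb ▸ ha ▸ congrArg Sigma.fst h.symm)
  | m + 1, hm =>
    rw [← sum_pathWeight W m, Matrix.sum_apply]
    have hps := hpath (m + 1) (by omega) hm
    have hfil : ∑ v ∈ Finset.univ.filter
        (fun v : Fin (m + 1 + 1) → Fin N => v 0 = i ∧ v (Fin.last (m + 1)) = j),
        pathWeight W (fun l => v ⟨min l (m + 1), by omega⟩) (m + 1) a b
        = ∑ v : Fin (m + 1 + 1) → Fin N,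
            pathWeight W (fun l => v ⟨min l (m + 1), by omega⟩) (m + 1) a b := by
      refine Finset.sum_filter_of_ne fun v _ hv => ?_
      constructor
      · by_contra h0
        refine hv (pathWeight_col W _ m a b ?_)
        have e : (⟨min 0 (m + 1), by omega⟩ : Fin (m + 2)) = 0 := Fin.ext (by simp)
        rw [e, hb]
        exact fun h => h0 h.symm
      · by_contra h0
        refine hv (pathWeight_row W _ m a b ?_)
        have e : (⟨min (m + 1) (m + 1), by omega⟩ : Fin (m + 2)) = Fin.last (m + 1) :=
          Fin.ext (by simp)
        rw [e, ha]
        exact fun h => h0 h.symm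
    rw [← hfil]
    have h2 : pathSum W i j (m + 1) a b = 0 := by rw [hps]; rfl
    rw [pathSum, Matrix.sum_apply] at h2
    exact h2

lemma pow_apply_zero (i j : Fin N) (hij : i ≠ j)
    (hpath : ∀ k, 0 < k → k < ∑ p, n p → pathSum W i j k = 0) :
    ∀ m, ∀ a b : BlkIdx n, a.1 = j → b.1 = i → (W ^ m) a b = 0 := by
  intro m a b ha hb
  have hD : Fintype.card (BlkIdx n) = ∑ p, n p := by
    simp [Fintype.card_sigma]
  have hpos : 0 < ∑ p, n p := by
    rw [← hD]
    exact Fintype.card_pos_iff.mpr ⟨a⟩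
  by_cases hm : m < ∑ p, n p
  · exact pow_apply_small W i j hij hpath m hm a b ha hb
  · have hch : W ^ m = Polynomial.aeval W (Polynomial.X ^ m %ₘ W.charpoly) := by
      rw [Polynomial.aeval_modByMonic_eq_self_of_root
        (Matrix.aeval_self_charpoly W)]
      simp
    have hdeg : (Polynomial.X ^ m %ₘ W.charpoly).natDegree < ∑ p, n p := by
      have h1 : W.charpoly ≠ 1 := by
        intro h
        have h2 := Matrix.charpoly_natDegree_eq_dim W
        rw [h, Polynomial.natDegree_one, hD] at h2
        omega
      have h3 := Polynomial.natDegree_modByMonic_lt (Polynomial.X ^ m)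
        (Matrix.charpoly_monic W) h1
      rwa [Matrix.charpoly_natDegree_eq_dim, hD] at h3
    rw [hch, Polynomial.aeval_eq_sum_range' hdeg, Matrix.sum_apply]
    refine Finset.sum_eq_zero fun l hl => ?_
    rw [Finset.mem_range] at hl
    rw [Matrix.smul_apply, pow_apply_small W i j hij hpath l hl a b ha hb, smul_zero]

end Aux

/-- If for players `i ≠ j` the path-weight sums from `i` to `j` vanish
for all lengths `0 < k < n`, then for the disturbed dynamics
`y^{k+1} = W y^k − c − d^k` with `d^k` supported on block `i`, and undisturbed
dynamics `x^{k+1} = W x^k − c` with `x⁰ = y⁰`, the block-`j` components satisfy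
`y^k_j = x^k_j` for all `k ≥ 0`, for every disturbance sequence and initial condition. -/
theorem stmt18 {N : ℕ} {n : Fin N → ℕ}
    (W : Matrix (BlkIdx n) (BlkIdx n) ℝ) (i j : Fin N) (hij : i ≠ j)
    (hpath : ∀ k, 0 < k → k < ∑ p, n p → pathSum W i j k = 0)
    (c : BlkIdx n → ℝ) (d : ℕ → BlkIdx n → ℝ)
    (hd : ∀ k, ∀ a : BlkIdx n, a.1 ≠ i → d k a = 0)
    (x y : ℕ → BlkIdx n → ℝ)
    (hx : ∀ k, x (k + 1) = W *ᵥ x k - c)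
    (hy : ∀ k, y (k + 1) = W *ᵥ y k - c - d k)
    (h0 : y 0 = x 0) :
    ∀ k : ℕ, ∀ a : BlkIdx n, a.1 = j → y k a = x k a := by
  have hpow := pow_apply_zero W i j hij hpath
  have hdvec : ∀ k m, ∀ a : BlkIdx n, a.1 = j → (W ^ m *ᵥ d k) a = 0 := by
    intro k m a ha
    rw [Matrix.mulVec, dotProduct]
    refine Finset.sum_eq_zero fun b _ => ?_
    by_cases hb : b.1 = i
    · rw [hpow m a b ha hb, zero_mul]
    · rw [hd k b hb, mul_zero]
  have key : ∀ k m, ∀ a : BlkIdx n, a.1 = j → (W ^ m *ᵥ (y k - x k)) a = 0 := by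
    intro k
    induction k with
    | zero =>
      intro m a ha
      rw [h0, sub_self, Matrix.mulVec_zero]
      rfl
    | succ k ih =>
      intro m a ha
      have hstep : y (k + 1) - x (k + 1) = W *ᵥ (y k - x k) - d k := by
        rw [hy k, hx k, Matrix.mulVec_sub]
        ext b
        simp only [Pi.sub_apply]
        ring
      rw [hstep, Matrix.mulVec_sub, Pi.sub_apply, Matrix.mulVec_mulVec, ← pow_succ,
        ih (m + 1) a ha, hdvec k m a ha, sub_zero]
  intro k a ha
  have hk := key k 0 a ha
  rw [pow_zero, Matrix.one_mulVec, Pi.sub_apply] at hk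
  linarith
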